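/- (Core of Theorem 4.3, part 1) For every integer k ≥ 2 there exists a connected 3-regular port-numbered graph G_k on 5·2^k − 4 vertices, of diameter at most 4k+2, in which all vertices have identical views: V(u) = V(v) for all vertices u, v of G_k. -/

import Mathlib

/-- A port-numbered graph on vertex type `V`: a finite connected simple graph in which,
at every vertex `v` of degree `deg v`, the incident edges are labeled by distinct port
numbers `0, …, deg v - 1`.  `next v i = some (u, j)` means that the edge with port
number `i` at `v` leads to the vertex `u`, at which it has port number `j`. -/
structure PortGraph (V : Type*) [Fintype V] where
  /-- the degree of each vertex -/
  deg : V → ℕ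
  /-- `next v i = some (u, j)` iff the edge with port `i` at `v` has `u` as its other
  endpoint, where it carries port number `j` -/
  next : V → ℕ → Option (V × ℕ)
  /-- exactly the ports `0, …, deg v - 1` are present at `v` -/
  next_isSome : ∀ v i, (next v i).isSome ↔ i < deg v
  /-- the port labeling is consistent at the two endpoints of every edge -/
  next_symm : ∀ v i u j, next v i = some (u, j) → next u j = some (v, i)
  /-- no self-loops -/
  next_ne : ∀ v i u j, next v i = some (u, j) → u ≠ v
  /-- no multiple edges: distinct ports at `v` lead to distinct neighbors -/
  next_inj : ∀ v i i' u j j', next v i = some (u, j) → next v i' = some (u, j') → i = i'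
  /-- the graph is connected -/
  connected : ∀ u v : V, Relation.ReflTransGen (fun a b => ∃ i j, next a i = some (b, j)) u v

namespace PortGraph

variable {V : Type*} [Fintype V]

/-- `P.viewEq t u v` means that the views of `u` and `v` truncated at depth `t` are equal:
`V^t(u) = V^t(v)`. -/
def viewEq (P : PortGraph V) : ℕ → V → V → Prop
  | 0, u, v => P.deg u = P.deg v
  | t + 1, u, v =>
      P.deg u = P.deg v ∧
        ∀ (i j j' : ℕ) (u' v' : V),
          P.next u i = some (u', j) → P.next v i = some (v', j') →
          j = j' ∧ viewEq P t u' v'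

/-- `P.ViewEq u v` means that the (infinite) views of `u` and `v` are equal:
`V(u) = V(v)`, i.e. `V^t(u) = V^t(v)` for every `t`. -/
def ViewEq (P : PortGraph V) (u v : V) : Prop := ∀ t, P.viewEq t u v

end PortGraph

namespace PortGraph

variable {V : Type*} [Fintype V]

/-- adjacency relation of a port-numbered graph -/
def Adj (P : PortGraph V) (a b : V) : Prop := ∃ i j, P.next a i = some (b, j)

/-- the underlying simple graph of a port-numbered graph -/
def toSimpleGraph (P : PortGraph V) : SimpleGraph V where
  Adj := P.Adj
  symm := by
    constructor
    rintro a b ⟨i, j, h⟩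
    exact ⟨j, i, P.next_symm a i b j h⟩
  loopless := by
    constructor
    rintro a ⟨i, j, h⟩
    exact P.next_ne a i a j h rfl

/-- `P.IsDiameter D` means that the diameter of `P` (the maximum distance between two
vertices) equals `D`. -/
def IsDiameter (P : PortGraph V) (D : ℕ) : Prop :=
  (∀ u v : V, P.toSimpleGraph.dist u v ≤ D) ∧ ∃ u v : V, P.toSimpleGraph.dist u v = D

end PortGraph


namespace SymGraphAux

/-- color of the parent edge of tree node `x` (heap indexing, root-level = {2,3}) -/
def p : ℕ → ℕ
  | x => if x < 4 then 0 else (p (x / 2) + 1 + x % 2) % 3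
decreasing_by exact Nat.div_lt_self (by omega) (by omega)

lemma p_lt3 (x : ℕ) : p x < 3 := by rw [p]; split <;> omega

lemma p_small {x : ℕ} (h : x < 4) : p x = 0 := by rw [p]; simp [h]

lemma p_eq {x : ℕ} (h : 4 ≤ x) : p x = (p (x / 2) + 1 + x % 2) % 3 := by
  rw [p]; simp [show ¬ x < 4 by omega]

lemma p_child0 {x : ℕ} (h : 2 ≤ x) : p (2 * x) = (p x + 1) % 3 := by
  rw [p_eq (by omega)]
  simp [Nat.mul_div_cancel_left, Nat.mul_mod_right]

lemma p_child1 {x : ℕ} (h : 2 ≤ x) : p (2 * x + 1) = (p x + 2) % 3 := by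
  rw [p_eq (by omega)]
  have h1 : (2 * x + 1) / 2 = x := by omega
  have h2 : (2 * x + 1) % 2 = 1 := by omega
  rw [h1, h2]

lemma p_flip_aux : ∀ j m, 4 * 2 ^ j ≤ m → m < 6 * 2 ^ j → p (m + 2 * 2 ^ j) = p m := by
  intro j
  induction j with
  | zero =>
    intro m h1 h2
    simp only [pow_zero, mul_one] at *
    have A : p (m + 2) = (p ((m + 2) / 2) + 1 + (m + 2) % 2) % 3 := p_eq (by omega)
    have B : p m = (p (m / 2) + 1 + m % 2) % 3 := p_eq (by omega)
    rw [A, B, show (m+2)/2 = 3 by omega, show m/2 = 2 by omega,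
      show (m+2)%2 = m%2 by omega, p_small (by omega), p_small (by omega)]
  | succ j ih =>
    intro m h1 h2
    have hT : 1 ≤ 2 ^ j := Nat.one_le_two_pow
    have hp : (2:ℕ) ^ (j+1) = 2 * 2 ^ j := by ring
    rw [hp] at h1 h2 ⊢
    have A : p (m + 2 * (2 * 2 ^ j)) = (p ((m + 2 * (2 * 2 ^ j)) / 2) + 1 + (m + 2 * (2 * 2 ^ j)) % 2) % 3 := p_eq (by omega)
    have B : p m = (p (m / 2) + 1 + m % 2) % 3 := p_eq (by omega)
    have e1 : (m + 2 * (2 * 2 ^ j)) / 2 = m / 2 + 2 * 2 ^ j := by omega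
    have e2 : (m + 2 * (2 * 2 ^ j)) % 2 = m % 2 := by omega
    rw [A, e1, e2, ih (m / 2) (by omega) (by omega), B]

/-- flipping the top string bit of a leaf preserves the parent-edge color -/
lemma p_flip {k m : ℕ} (hk : 2 ≤ k) (h1 : 2 ^ k ≤ m) (h2 : m < 3 * (2 ^ k / 2)) :
    p (m + 2 ^ k / 2) = p m := by
  have e : (2:ℕ) ^ k = 4 * 2 ^ (k - 2) := by
    have : k - 2 + 2 = k := by omega
    calc (2:ℕ) ^ k = 2 ^ (k - 2 + 2) := by rw [this]
    _ = 4 * 2 ^ (k-2) := by ring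
  have e2 : (2:ℕ) ^ k / 2 = 2 * 2 ^ (k - 2) := by omega
  rw [e2] at h2 ⊢
  rw [e] at h1
  exact p_flip_aux (k - 2) m h1 (by omega)


/-- The neighbor with color `c` of vertex `v` in the graph `G_k` (`N = 2 ^ k`).
Vertices `[0, 2N-2)`: tree `A` (heap index `x = v + 2`); vertices `[2N-2, 4N-4)`:
tree `B` (heap index `x = v - (2N-4)`); vertices `[4N-4, 5N-4)`: middle layer
(leaf index `m = v - (3N-4)` in `[N, 2N)`). -/
def nbr (N c v : ℕ) : ℕ :=
  if v + 2 < 2 * N then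
    if c = p (v + 2) then (if v + 2 < 4 then 1 - v else (v + 2) / 2 - 2)
    else if c = (p (v + 2) + 1) % 3 then
      (if v + 2 < N then 2 * (v + 2) - 2 else v + 3 * N - 2)
    else (if v + 2 < N then 2 * (v + 2) - 1 else v + 2 * N - 2)
  else if v < 4 * N - 4 then
    if c = (p (v - (2 * N - 4)) + 1) % 3 then
      (if v - (2 * N - 4) < 4 then (5 - (v - (2 * N - 4))) + 2 * N - 4
       else (v - (2 * N - 4)) / 2 + 2 * N - 4)
    else if c = (p (v - (2 * N - 4)) + 2) % 3 then
      (if v - (2 * N - 4) < N then 2 * (v - (2 * N - 4)) + 2 * N - 4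
       else v - (2 * N - 4) - 2)
    else
      (if v - (2 * N - 4) < N then 2 * (v - (2 * N - 4)) + 1 + 2 * N - 4
       else v - (2 * N - 4) + 3 * N - 4)
  else
    if c = p (v - (3 * N - 4)) then v - (3 * N - 4) + 2 * N - 4
    else if c = (p (v - (3 * N - 4)) + 1) % 3 then v - (3 * N - 4) - 2
    else (if v - (3 * N - 4) < 3 * (N / 2) then v - (3 * N - 4) + N / 2
          else v - (3 * N - 4) - N / 2) + 3 * N - 4

section Steps

variable {N x m b : ℕ} (hN : 4 ≤ N)
include hN

lemma nbr_A_sib (h2 : 2 ≤ x) (h4 : x < 4) : nbr N 0 (x - 2) = 3 - x := by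
  unfold nbr
  rw [show x - 2 + 2 = x by omega, p_small h4]
  split_ifs <;> omega

lemma nbr_A_up (h4 : 4 ≤ x) (h2N : x < 2 * N) : nbr N (p x) (x - 2) = x / 2 - 2 := by
  unfold nbr
  have := p_lt3 x
  rw [show x - 2 + 2 = x by omega]
  split_ifs <;> omega

lemma nbr_A_childL (h2 : 2 ≤ x) (hx : x < N) :
    nbr N ((p x + 1) % 3) (x - 2) = 2 * x - 2 := by
  unfold nbr
  have := p_lt3 x
  rw [show x - 2 + 2 = x by omega]
  split_ifs <;> omega

lemma nbr_A_childR (h2 : 2 ≤ x) (hx : x < N) :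
    nbr N ((p x + 2) % 3) (x - 2) = 2 * x - 1 := by
  unfold nbr
  have := p_lt3 x
  rw [show x - 2 + 2 = x by omega]
  split_ifs <;> omega

lemma nbr_A_leafM (h1 : N ≤ x) (h2 : x < 2 * N) :
    nbr N ((p x + 1) % 3) (x - 2) = x + 3 * N - 4 := by
  unfold nbr
  have := p_lt3 x
  rw [show x - 2 + 2 = x by omega]
  split_ifs <;> omega

lemma nbr_A_leafB (h1 : N ≤ x) (h2 : x < 2 * N) :
    nbr N ((p x + 2) % 3) (x - 2) = x + 2 * N - 4 := by
  unfold nbr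
  have := p_lt3 x
  rw [show x - 2 + 2 = x by omega]
  split_ifs <;> omega

lemma nbr_B_sib (h2 : 2 ≤ x) (h4 : x < 4) :
    nbr N 1 (x + 2 * N - 4) = (5 - x) + 2 * N - 4 := by
  unfold nbr
  rw [show x + 2 * N - 4 - (2 * N - 4) = x by omega, p_small h4]
  split_ifs <;> omega

lemma nbr_B_up (h4 : 4 ≤ x) (h2N : x < 2 * N) :
    nbr N ((p x + 1) % 3) (x + 2 * N - 4) = x / 2 + 2 * N - 4 := by
  unfold nbr
  have := p_lt3 x
  rw [show x + 2 * N - 4 - (2 * N - 4) = x by omega]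
  split_ifs <;> omega

lemma nbr_B_childL (h2 : 2 ≤ x) (hx : x < N) :
    nbr N ((p x + 2) % 3) (x + 2 * N - 4) = 2 * x + 2 * N - 4 := by
  unfold nbr
  have := p_lt3 x
  rw [show x + 2 * N - 4 - (2 * N - 4) = x by omega]
  split_ifs <;> omega

lemma nbr_B_childR (h2 : 2 ≤ x) (hx : x < N) :
    nbr N (p x) (x + 2 * N - 4) = 2 * x + 1 + 2 * N - 4 := by
  unfold nbr
  have := p_lt3 x
  rw [show x + 2 * N - 4 - (2 * N - 4) = x by omega]
  split_ifs <;> omega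

lemma nbr_B_leafA (h1 : N ≤ x) (h2 : x < 2 * N) :
    nbr N ((p x + 2) % 3) (x + 2 * N - 4) = x - 2 := by
  unfold nbr
  have := p_lt3 x
  rw [show x + 2 * N - 4 - (2 * N - 4) = x by omega]
  split_ifs <;> omega

lemma nbr_B_leafM (h1 : N ≤ x) (h2 : x < 2 * N) :
    nbr N (p x) (x + 2 * N - 4) = x + 3 * N - 4 := by
  unfold nbr
  have := p_lt3 x
  rw [show x + 2 * N - 4 - (2 * N - 4) = x by omega]
  split_ifs <;> omega

lemma nbr_M_b (h1 : N ≤ m) (h2 : m < 2 * N) :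
    nbr N (p m) (m + 3 * N - 4) = m + 2 * N - 4 := by
  unfold nbr
  have := p_lt3 m
  rw [show m + 3 * N - 4 - (3 * N - 4) = m by omega]
  split_ifs <;> omega

lemma nbr_M_a (h1 : N ≤ m) (h2 : m < 2 * N) :
    nbr N ((p m + 1) % 3) (m + 3 * N - 4) = m - 2 := by
  unfold nbr
  have := p_lt3 m
  rw [show m + 3 * N - 4 - (3 * N - 4) = m by omega]
  split_ifs <;> omega

lemma nbr_M_flipL (h1 : N ≤ m) (h2 : m < 2 * N) (hL : m < 3 * (N / 2)) :
    nbr N ((p m + 2) % 3) (m + 3 * N - 4) = m + N / 2 + 3 * N - 4 := by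
  unfold nbr
  have := p_lt3 m
  rw [show m + 3 * N - 4 - (3 * N - 4) = m by omega]
  split_ifs <;> omega

lemma nbr_M_flipR (h1 : N ≤ m) (h2 : m < 2 * N) (hL : 3 * (N / 2) ≤ m) :
    nbr N ((p m + 2) % 3) (m + 3 * N - 4) = m - N / 2 + 3 * N - 4 := by
  unfold nbr
  have := p_lt3 m
  rw [show m + 3 * N - 4 - (3 * N - 4) = m by omega]
  split_ifs <;> omega

end Steps

section Main

variable {k : ℕ} (hk : 2 ≤ k)
include hk

lemma N4 : 4 ≤ 2 ^ k := by
  calc (4:ℕ) = 2 ^ 2 := by norm_num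
  _ ≤ 2 ^ k := Nat.pow_le_pow_right (by norm_num) hk

lemma Nmod2 : 2 ^ k % 2 = 0 := by
  have : k - 1 + 1 = k := by omega
  have : (2:ℕ) ^ k = 2 * 2 ^ (k - 1) := by
    calc (2:ℕ) ^ k = 2 ^ (k - 1 + 1) := by rw [‹k - 1 + 1 = k›]
    _ = 2 * 2 ^ (k-1) := by ring
  omega

lemma Ndiv2 : 3 * (2 ^ k / 2) ≤ 2 * 2 ^ k := by
  have := Nmod2 hk
  omega

lemma nbr_lt {c v : ℕ} (hv : v < 5 * 2 ^ k - 4) : nbr (2 ^ k) c v < 5 * 2 ^ k - 4 := by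
  have hN := N4 hk
  have hN2 := Nmod2 hk
  unfold nbr
  have := p_lt3 (v + 2)
  have := p_lt3 (v - (2 * 2 ^ k - 4))
  have := p_lt3 (v - (3 * 2 ^ k - 4))
  split_ifs <;> omega

lemma nbr_ne {c v : ℕ} (hv : v < 5 * 2 ^ k - 4) : nbr (2 ^ k) c v ≠ v := by
  have hN := N4 hk
  have hN2 := Nmod2 hk
  unfold nbr
  have := p_lt3 (v + 2)
  have := p_lt3 (v - (2 * 2 ^ k - 4))
  have := p_lt3 (v - (3 * 2 ^ k - 4))
  split_ifs <;> omega

lemma nbr_inj {c c' v : ℕ} (hc : c < 3) (hc' : c' < 3) (hv : v < 5 * 2 ^ k - 4)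
    (h : nbr (2 ^ k) c v = nbr (2 ^ k) c' v) : c = c' := by
  have hN := N4 hk
  have hN2 := Nmod2 hk
  unfold nbr at h
  have := p_lt3 (v + 2)
  have := p_lt3 (v - (2 * 2 ^ k - 4))
  have := p_lt3 (v - (3 * 2 ^ k - 4))
  split_ifs at h <;> omega

lemma nbr_invol {c v : ℕ} (hc : c < 3) (hv : v < 5 * 2 ^ k - 4) :
    nbr (2 ^ k) c (nbr (2 ^ k) c v) = v := by
  have hN := N4 hk
  have hN2 := Nmod2 hk
  by_cases hA : v + 2 < 2 * 2 ^ k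
  · obtain ⟨x, hx2, hx2N, rfl⟩ : ∃ x, 2 ≤ x ∧ x < 2 * 2 ^ k ∧ v = x - 2 :=
      ⟨v + 2, by omega, by omega, by omega⟩
    have hq := p_lt3 x
    have hcc : c = p x ∨ c = (p x + 1) % 3 ∨ c = (p x + 2) % 3 := by omega
    rcases hcc with rfl | rfl | rfl
    · by_cases h4 : x < 4
      · have hp0 : p x = 0 := p_small h4
        rw [hp0, nbr_A_sib hN hx2 h4, show (3 - x : ℕ) = (5 - x) - 2 by omega,
          nbr_A_sib hN (by omega) (by omega)]
        omega
      · rw [nbr_A_up hN (by omega) hx2N]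
        rcases Nat.mod_two_eq_zero_or_one x with hpar | hpar
        · have hcol : p x = (p (x / 2) + 1) % 3 := by rw [p_eq (by omega)]; omega
          rw [hcol, nbr_A_childL hN (by omega) (by omega)]; omega
        · have hcol : p x = (p (x / 2) + 2) % 3 := by rw [p_eq (by omega)]; omega
          rw [hcol, nbr_A_childR hN (by omega) (by omega)]; omega
    · by_cases hleaf : x < 2 ^ k
      · rw [nbr_A_childL hN hx2 hleaf, show (2 * x - 2 : ℕ) = 2 * x - 2 from rfl,
          show ((p x + 1) % 3) = p (2 * x) from (p_child0 hx2).symm,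
          nbr_A_up hN (by omega) (by omega)]
        omega
      · rw [nbr_A_leafM hN (by omega) hx2N, nbr_M_a hN (by omega) hx2N]
    · by_cases hleaf : x < 2 ^ k
      · rw [nbr_A_childR hN hx2 hleaf, show (2 * x - 1 : ℕ) = (2 * x + 1) - 2 by omega,
          show ((p x + 2) % 3) = p (2 * x + 1) from (p_child1 hx2).symm,
          nbr_A_up hN (by omega) (by omega)]
        omega
      · rw [nbr_A_leafB hN (by omega) hx2N, nbr_B_leafA hN (by omega) hx2N]
  · by_cases hB : v < 4 * 2 ^ k - 4
    · obtain ⟨x, hx2, hx2N, rfl⟩ : ∃ x, 2 ≤ x ∧ x < 2 * 2 ^ k ∧ v = x + 2 * 2 ^ k - 4 :=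
        ⟨v - (2 * 2 ^ k - 4), by omega, by omega, by omega⟩
      have hq := p_lt3 x
      have hcc : c = (p x + 1) % 3 ∨ c = (p x + 2) % 3 ∨ c = p x := by omega
      rcases hcc with rfl | rfl | rfl
      · by_cases h4 : x < 4
        · have hp0 : p x = 0 := p_small h4
          have hc1 : (p x + 1) % 3 = 1 := by omega
          rw [hc1, nbr_B_sib hN hx2 h4, nbr_B_sib hN (by omega) (by omega)]
          omega
        · rw [nbr_B_up hN (by omega) hx2N]
          rcases Nat.mod_two_eq_zero_or_one x with hpar | hpar
          · have hcol : (p x + 1) % 3 = (p (x / 2) + 2) % 3 := by rw [p_eq (by omega)]; omega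
            rw [hcol, nbr_B_childL hN (by omega) (by omega)]; omega
          · have hcol : (p x + 1) % 3 = p (x / 2) := by
              rw [p_eq (by omega)]; have := p_lt3 (x / 2); omega
            rw [hcol, nbr_B_childR hN (by omega) (by omega)]; omega
      · by_cases hleaf : x < 2 ^ k
        · rw [nbr_B_childL hN hx2 hleaf]
          have hcol : (p x + 2) % 3 = (p (2 * x) + 1) % 3 := by rw [p_child0 hx2]; omega
          rw [hcol, nbr_B_up hN (by omega) (by omega)]; omega
        · rw [nbr_B_leafA hN (by omega) hx2N, nbr_A_leafB hN (by omega) hx2N]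
      · by_cases hleaf : x < 2 ^ k
        · rw [nbr_B_childR hN hx2 hleaf]
          have hcol : p x = (p (2 * x + 1) + 1) % 3 := by rw [p_child1 hx2]; omega
          rw [hcol, nbr_B_up hN (by omega) (by omega)]; omega
        · rw [nbr_B_leafM hN (by omega) hx2N, nbr_M_b hN (by omega) hx2N]
    · obtain ⟨m, hm1, hm2, rfl⟩ : ∃ m, 2 ^ k ≤ m ∧ m < 2 * 2 ^ k ∧ v = m + 3 * 2 ^ k - 4 :=
        ⟨v - (3 * 2 ^ k - 4), by omega, by omega, by omega⟩
      have hq := p_lt3 m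
      have hcc : c = p m ∨ c = (p m + 1) % 3 ∨ c = (p m + 2) % 3 := by omega
      rcases hcc with rfl | rfl | rfl
      · rw [nbr_M_b hN hm1 hm2, nbr_B_leafM hN hm1 hm2]
      · rw [nbr_M_a hN hm1 hm2, nbr_A_leafM hN hm1 hm2]
      · by_cases hL : m < 3 * (2 ^ k / 2)
        · rw [nbr_M_flipL hN hm1 hm2 hL]
          have hpf : p (m + 2 ^ k / 2) = p m := p_flip hk hm1 hL
          rw [← hpf, nbr_M_flipR hN (by omega) (by omega) (by omega)]
          omega
        · have hm' : 2 ^ k ≤ m - 2 ^ k / 2 := by omega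
          have hpf : p (m - 2 ^ k / 2 + 2 ^ k / 2) = p (m - 2 ^ k / 2) :=
            p_flip hk hm' (by omega)
          have hpm : p m = p (m - 2 ^ k / 2) := by rw [← hpf]; congr 1; omega
          rw [nbr_M_flipR hN hm1 hm2 (by omega), hpm,
            nbr_M_flipL hN (by omega) (by omega) (by omega)]
          omega

/-- from a tree-`A` vertex one can climb to vertex `0` (heap node `2`) -/
lemma reach_A : ∀ j x, 2 ≤ x → x < 2 ^ (j + 1) → x < 2 * 2 ^ k →
    ∃ l : List ℕ, (∀ c ∈ l, c < 3) ∧ l.length ≤ j ∧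
      l.foldl (fun a c => nbr (2 ^ k) c a) (x - 2) = 0 := by
  have hN := N4 hk
  intro j
  induction j with
  | zero => intro x h1 h2 h3; omega
  | succ j ih =>
    intro x h1 h2 h3
    by_cases h4 : x < 4
    · rcases (by omega : x = 2 ∨ x = 3) with rfl | rfl
      · exact ⟨[], by simp, by simp, by simp⟩
      · refine ⟨[0], by simp, by simp, ?_⟩
        simp only [List.foldl_cons, List.foldl_nil]
        rw [nbr_A_sib hN (by omega) (by omega)]
    · obtain ⟨l, hl3, hlen, hfold⟩ := ih (x / 2) (by omega) (by omega) (by omega)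
      refine ⟨p x :: l, ?_, by simp; omega, ?_⟩
      · intro c hcl
        rcases List.mem_cons.1 hcl with rfl | h
        · exact p_lt3 x
        · exact hl3 c h
      · simp only [List.foldl_cons]
        rw [nbr_A_up hN (by omega) h3]
        exact hfold

/-- from a tree-`B` vertex one can escape to tree `A` and then climb to `0` -/
lemma reach_B : ∀ j x, 2 ≤ x → x < 2 * 2 ^ k → 2 ^ k ≤ x * 2 ^ j →
    ∃ l : List ℕ, (∀ c ∈ l, c < 3) ∧ l.length ≤ j + 1 + k ∧
      l.foldl (fun a c => nbr (2 ^ k) c a) (x + 2 * 2 ^ k - 4) = 0 := by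
  have hN := N4 hk
  intro j
  induction j with
  | zero =>
    intro x h1 h2 h3
    simp only [pow_zero, mul_one] at h3
    obtain ⟨l, hl3, hlen, hfold⟩ := reach_A hk k x h1 (by rw [pow_succ]; omega) h2
    refine ⟨(p x + 2) % 3 :: l, ?_, by simp; omega, ?_⟩
    · intro c hcl
      rcases List.mem_cons.1 hcl with rfl | h
      · omega
      · exact hl3 c h
    · simp only [List.foldl_cons]
      rw [nbr_B_leafA hN h3 h2]
      exact hfold
  | succ j ih =>
    intro x h1 h2 h3
    by_cases hleaf : 2 ^ k ≤ x
    · obtain ⟨l, hl3, hlen, hfold⟩ := reach_A hk k x h1 (by rw [pow_succ]; omega) h2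
      refine ⟨(p x + 2) % 3 :: l, ?_, by simp; omega, ?_⟩
      · intro c hcl
        rcases List.mem_cons.1 hcl with rfl | h
        · omega
        · exact hl3 c h
      · simp only [List.foldl_cons]
        rw [nbr_B_leafA hN hleaf h2]
        exact hfold
    · obtain ⟨l, hl3, hlen, hfold⟩ := ih (2 * x) (by omega) (by omega)
        (by calc (2:ℕ) ^ k ≤ x * 2 ^ (j + 1) := h3
              _ = 2 * x * 2 ^ j := by ring)
      refine ⟨(p x + 2) % 3 :: l, ?_, by simp; omega, ?_⟩
      · intro c hcl
        rcases List.mem_cons.1 hcl with rfl | h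
        · omega
        · exact hl3 c h
      · simp only [List.foldl_cons]
        rw [nbr_B_childL hN h1 (by omega)]
        exact hfold

/-- every vertex reaches vertex `0` in at most `2k + 1` steps -/
lemma reach_all (v : ℕ) (hv : v < 5 * 2 ^ k - 4) :
    ∃ l : List ℕ, (∀ c ∈ l, c < 3) ∧ l.length ≤ 2 * k + 1 ∧
      l.foldl (fun a c => nbr (2 ^ k) c a) v = 0 := by
  have hN := N4 hk
  by_cases hA : v + 2 < 2 * 2 ^ k
  · obtain ⟨x, hx2, hx2N, rfl⟩ : ∃ x, 2 ≤ x ∧ x < 2 * 2 ^ k ∧ v = x - 2 :=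
      ⟨v + 2, by omega, by omega, by omega⟩
    obtain ⟨l, hl3, hlen, hfold⟩ := reach_A hk k x hx2 (by rw [pow_succ]; omega) hx2N
    exact ⟨l, hl3, by omega, hfold⟩
  · by_cases hB : v < 4 * 2 ^ k - 4
    · obtain ⟨x, hx2, hx2N, rfl⟩ : ∃ x, 2 ≤ x ∧ x < 2 * 2 ^ k ∧ v = x + 2 * 2 ^ k - 4 :=
        ⟨v - (2 * 2 ^ k - 4), by omega, by omega, by omega⟩
      obtain ⟨l, hl3, hlen, hfold⟩ := reach_B hk k x hx2 hx2N
        (by calc (2:ℕ) ^ k ≤ 2 ^ k * 2 := by omega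
            _ ≤ 2 ^ k * x := by exact Nat.mul_le_mul_left _ hx2
            _ = x * 2 ^ k := by ring)
      exact ⟨l, hl3, by omega, hfold⟩
    · obtain ⟨m, hm1, hm2, rfl⟩ : ∃ m, 2 ^ k ≤ m ∧ m < 2 * 2 ^ k ∧ v = m + 3 * 2 ^ k - 4 :=
        ⟨v - (3 * 2 ^ k - 4), by omega, by omega, by omega⟩
      obtain ⟨l, hl3, hlen, hfold⟩ := reach_A hk k m (by omega) (by rw [pow_succ]; omega) hm2
      refine ⟨(p m + 1) % 3 :: l, ?_, by simp; omega, ?_⟩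
      · intro c hcl
        rcases List.mem_cons.1 hcl with rfl | h
        · omega
        · exact hl3 c h
      · simp only [List.foldl_cons]
        rw [nbr_M_a hN hm1 hm2]
        exact hfold

end Main

end SymGraphAux


/-- (Core of Theorem 4.3, part 1) For every `k ≥ 2` there exists a connected 3-regular
port-numbered graph on `5 · 2^k − 4` vertices, of diameter at most `4k + 2`, in which
all vertices have identical views. -/
theorem exists_symmetric_graph_small_diameter (k : ℕ) (hk : 2 ≤ k) :
    ∃ P : PortGraph (Fin (5 * 2 ^ k - 4)),
      (∀ v : Fin (5 * 2 ^ k - 4), P.deg v = 3) ∧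
      (∀ u v : Fin (5 * 2 ^ k - 4), P.toSimpleGraph.dist u v ≤ 4 * k + 2) ∧
      (∀ u v : Fin (5 * 2 ^ k - 4), P.ViewEq u v) := by
  classical
  have hN := SymGraphAux.N4 hk
  have hn0 : 0 < 5 * 2 ^ k - 4 := by omega
  let F : Fin 3 → Fin (5 * 2 ^ k - 4) → Fin (5 * 2 ^ k - 4) := fun c v =>
    ⟨SymGraphAux.nbr (2 ^ k) c.val v.val, SymGraphAux.nbr_lt hk v.isLt⟩
  have hFval : ∀ (c : Fin 3) (v), (F c v).val = SymGraphAux.nbr (2 ^ k) c.val v.val :=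
    fun _ _ => rfl
  have hFF : ∀ (c : Fin 3) (v), F c (F c v) = v := by
    intro c v
    apply Fin.ext
    exact SymGraphAux.nbr_invol hk c.isLt v.isLt
  let P : PortGraph (Fin (5 * 2 ^ k - 4)) :=
    { deg := fun _ => 3
      next := fun v i => if h : i < 3 then some (F ⟨i, h⟩ v, i) else none
      next_isSome := by
        intro v i
        by_cases h : i < 3 <;> simp [h]
      next_symm := by
        intro v i u j h
        by_cases hi : i < 3
        · rw [dif_pos hi] at h
          obtain ⟨h1, h2⟩ := Prod.mk.injEq .. ▸ Option.some.inj h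
          subst h2
          rw [dif_pos hi]
          rw [← h1, hFF]
        · rw [dif_neg hi] at h; cases h
      next_ne := by
        intro v i u j h
        by_cases hi : i < 3
        · rw [dif_pos hi] at h
          obtain ⟨h1, h2⟩ := Prod.mk.injEq .. ▸ Option.some.inj h
          rw [← h1]
          intro hc
          exact SymGraphAux.nbr_ne hk v.isLt (congrArg Fin.val hc)
        · rw [dif_neg hi] at h; cases h
      next_inj := by
        intro v i i' u j j' h h'
        by_cases hi : i < 3
        · by_cases hi' : i' < 3
          · rw [dif_pos hi] at h
            rw [dif_pos hi'] at h'
            obtain ⟨h1, _⟩ := Prod.mk.injEq .. ▸ Option.some.inj h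
            obtain ⟨h1', _⟩ := Prod.mk.injEq .. ▸ Option.some.inj h'
            exact SymGraphAux.nbr_inj hk hi hi' v.isLt
              (congrArg Fin.val (h1.trans h1'.symm))
          · rw [dif_neg hi'] at h'; cases h'
        · rw [dif_neg hi] at h; cases h
      connected := by
        intro u v
        set R : Fin (5 * 2 ^ k - 4) → Fin (5 * 2 ^ k - 4) → Prop := fun a b =>
          ∃ i j, (if h : i < 3 then some (F ⟨i, h⟩ a, i) else none) = some (b, j) with hR
        show Relation.ReflTransGen R u v
        have hstep : ∀ (c : ℕ) (hc : c < 3) (w), R w (F ⟨c, hc⟩ w) :=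
          fun c hc w => ⟨c, c, dif_pos hc⟩
        have hsym : Symmetric R := by
          rintro a b ⟨i, j, h⟩
          by_cases hi : i < 3
          · rw [dif_pos hi] at h
            obtain ⟨h1, h2⟩ := Prod.mk.injEq .. ▸ Option.some.inj h
            subst h2
            refine ⟨i, i, ?_⟩
            rw [dif_pos hi, ← h1, hFF]
          · rw [dif_neg hi] at h; cases h
        have key : ∀ (l : List ℕ), (∀ c ∈ l, c < 3) → ∀ w : Fin (5 * 2 ^ k - 4),
            l.foldl (fun a c => SymGraphAux.nbr (2 ^ k) c a) w.val = 0 →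
            Relation.ReflTransGen R w ⟨0, hn0⟩ := by
          intro l
          induction l with
          | nil =>
            intro _ w h
            have : w = ⟨0, hn0⟩ := Fin.ext (by simpa using h)
            rw [this]
          | cons c t ih =>
            intro hl w h
            have hc : c < 3 := hl c List.mem_cons_self
            refine Relation.ReflTransGen.head (hstep c hc w) (ih ?_ (F ⟨c, hc⟩ w) ?_)
            · intro c' hc'; exact hl c' (List.mem_cons_of_mem _ hc')
            · simpa using h
        obtain ⟨lu, hlu3, _, hlufold⟩ := SymGraphAux.reach_all hk u.val u.isLt
        obtain ⟨lv, hlv3, _, hlvfold⟩ := SymGraphAux.reach_all hk v.val v.isLt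
        exact (key lu hlu3 u hlufold).trans
          (by haveI : Std.Symm R := ⟨fun a b h => hsym h⟩; exact Std.Symm.symm _ _ (key lv hlv3 v hlvfold)) }
  refine ⟨P, fun _ => rfl, ?_, ?_⟩
  · -- diameter
    have hadj : ∀ (c : ℕ) (hc : c < 3) (w), P.toSimpleGraph.Adj w (F ⟨c, hc⟩ w) :=
      fun c hc w => ⟨c, c, dif_pos hc⟩
    have wkey : ∀ (l : List ℕ), (∀ c ∈ l, c < 3) → ∀ w : Fin (5 * 2 ^ k - 4),
        l.foldl (fun a c => SymGraphAux.nbr (2 ^ k) c a) w.val = 0 →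
        ∃ p : P.toSimpleGraph.Walk w ⟨0, hn0⟩, p.length ≤ l.length := by
      intro l
      induction l with
      | nil =>
        intro _ w h
        have : w = ⟨0, hn0⟩ := Fin.ext (by simpa using h)
        subst this
        exact ⟨SimpleGraph.Walk.nil, le_refl _⟩
      | cons c t ih =>
        intro hl w h
        have hc : c < 3 := hl c List.mem_cons_self
        obtain ⟨p, hp⟩ := ih (fun c' hc' => hl c' (List.mem_cons_of_mem _ hc'))
          (F ⟨c, hc⟩ w) (by simpa using h)
        exact ⟨SimpleGraph.Walk.cons (hadj c hc w) p, by simpa using hp⟩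
    intro u v
    obtain ⟨lu, hlu3, hlulen, hlufold⟩ := SymGraphAux.reach_all hk u.val u.isLt
    obtain ⟨lv, hlv3, hlvlen, hlvfold⟩ := SymGraphAux.reach_all hk v.val v.isLt
    obtain ⟨pu, hpu⟩ := wkey lu hlu3 u hlufold
    obtain ⟨pv, hpv⟩ := wkey lv hlv3 v hlvfold
    have := SimpleGraph.dist_le (pu.append pv.reverse)
    rw [SimpleGraph.Walk.length_append, SimpleGraph.Walk.length_reverse] at this
    omega
  · -- views
    have main : ∀ t (u v : Fin (5 * 2 ^ k - 4)), P.viewEq t u v := by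
      intro t
      induction t with
      | zero => intro u v; rfl
      | succ t ih =>
        intro u v
        refine ⟨rfl, ?_⟩
        intro i j j' u' v' h1 h2
        by_cases hi : i < 3
        · have e1 : P.next u i = some (F ⟨i, hi⟩ u, i) := dif_pos hi
          have e2 : P.next v i = some (F ⟨i, hi⟩ v, i) := dif_pos hi
          rw [e1] at h1
          rw [e2] at h2
          obtain ⟨hu1, hu2⟩ := Prod.mk.injEq .. ▸ Option.some.inj h1
          obtain ⟨hv1, hv2⟩ := Prod.mk.injEq .. ▸ Option.some.inj h2
          subst hu2; subst hv2
          refine ⟨rfl, ?_⟩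
          rw [← hu1, ← hv1]
          exact ih _ _
        · have : P.next u i = none := dif_neg hi
          rw [this] at h1; cases h1
    exact fun u v t => main t u v
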